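/- Let M be a compact smooth manifold and E a smooth complex vector bundle of finite rank over M. Then there exist a natural number n and an injective C^∞(M,ℂ)-module homomorphism from Γ^∞(E) into the free module (C^∞(M,ℂ))^n; that is, the module of sections Γ^∞(E) is of finite type. -/

import Mathlib

open Bundle Manifold
open scoped TensorProduct

local notation "∞" => (⊤ : ℕ∞)

noncomputable section

/-- Complex multiplication and addition are smooth over `ℝ`, so that the complex-valued smooth
functions on a real manifold form a (comm)ring. -/
instance : ContMDiffRing 𝓘(ℝ, ℂ) ∞ ℂ where
  contMDiff_add := by
    rw [← modelWithCornersSelf_prod, chartedSpaceSelf_prod]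
    exact (contDiff_add (𝕜 := ℝ) (F := ℂ) (n := ∞)).contMDiff
  contMDiff_mul := by
    rw [← modelWithCornersSelf_prod, chartedSpaceSelf_prod]
    exact (contDiff_mul (𝕜 := ℝ) (𝔸 := ℂ) (n := ∞)).contMDiff

variable {EM : Type*} [NormedAddCommGroup EM] [NormedSpace ℝ EM] [FiniteDimensional ℝ EM]
  {HM : Type*} [TopologicalSpace HM] {IM : ModelWithCorners ℝ EM HM}
  {M : Type*} [TopologicalSpace M] [ChartedSpace HM M] [IsManifold IM ∞ M]
  [T2Space M] [SecondCountableTopology M] [CompactSpace M]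

/-- The constant functions make the smooth complex-valued functions a `ℂ`-algebra. -/
instance : Algebra ℂ C^∞⟮IM, M; 𝓘(ℝ, ℂ), ℂ⟯ :=
  RingHom.toAlgebra
    { toFun := fun c => ⟨fun _ => c, contMDiff_const⟩
      map_one' := rfl
      map_mul' := fun _ _ => rfl
      map_zero' := rfl
      map_add' := fun _ _ => rfl }

variable {F : Type*} [NormedAddCommGroup F] [NormedSpace ℂ F] [FiniteDimensional ℂ F]
  {V : M → Type*} [TopologicalSpace (TotalSpace F V)]
  [∀ x, AddCommGroup (V x)] [∀ x, Module ℂ (V x)] [∀ x, TopologicalSpace (V x)]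
  [FiberBundle F V] [VectorBundle ℂ F V] [VectorBundle ℝ F V] [ContMDiffVectorBundle ∞ F V IM]

/-- Pointwise scalar multiplication of a smooth section by a smooth function. -/
instance ContMDiffSection.instSMulSmoothMap :
    SMul C^∞⟮IM, M; 𝓘(ℝ, ℂ), ℂ⟯ Cₛ^∞⟮IM; F, V⟯ := by
  refine ⟨fun f s => ⟨fun x => f x • s x, ?_⟩⟩
  intro x₀
  have hs := s.contMDiff x₀
  have hf : ContMDiffAt IM 𝓘(ℝ, ℂ) ∞ f x₀ := f.contMDiff x₀
  rw [contMDiffAt_section] at hs ⊢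
  set e := trivializationAt F V x₀
  have h1 : ContMDiffAt IM 𝓘(ℝ, F →L[ℝ] F) ∞
      (fun x => (ContinuousLinearMap.lsmul ℝ ℂ (f x) : F →L[ℝ] F)) x₀ :=
    ContDiff.comp_contMDiffAt
      (g := ⇑(ContinuousLinearMap.lsmul ℝ ℂ : ℂ →L[ℝ] F →L[ℝ] F))
      (ContinuousLinearMap.contDiff _) hf
  refine (h1.clm_apply hs).congr_of_eventuallyEq ?_
  refine Filter.eventually_of_mem
    (e.open_baseSet.mem_nhds <| mem_baseSet_trivializationAt F V x₀) ?_
  intro x hx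
  simp only [ContinuousLinearMap.lsmul_apply]
  exact (e.linear ℂ hx).2 (f x) (s x)

set_option linter.unusedSectionVars false in
@[simp]
theorem ContMDiffSection.coe_smul_smoothMap (f : C^∞⟮IM, M; 𝓘(ℝ, ℂ), ℂ⟯)
    (s : Cₛ^∞⟮IM; F, V⟯) (x : M) : (f • s) x = f x • s x :=
  rfl

/-- The smooth sections of a smooth complex vector bundle form a module over the algebra of
smooth complex-valued functions on the base. -/
instance ContMDiffSection.instModuleSmoothMap :
    Module C^∞⟮IM, M; 𝓘(ℝ, ℂ), ℂ⟯ Cₛ^∞⟮IM; F, V⟯ where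
  one_smul s := ContMDiffSection.ext fun x => one_smul ℂ (s x)
  mul_smul f g s := ContMDiffSection.ext fun x => mul_smul (f x) (g x) (s x)
  smul_zero f := ContMDiffSection.ext fun x => smul_zero (f x)
  smul_add f s t := ContMDiffSection.ext fun x => smul_add (f x) (s x) (t x)
  add_smul f g s := ContMDiffSection.ext fun x => add_smul (f x) (g x) (s x)
  zero_smul s := ContMDiffSection.ext fun x => zero_smul ℂ (s x)

instance ContMDiffSection.instModuleComplex : Module ℂ Cₛ^∞⟮IM; F, V⟯ :=
  Module.compHom _ (algebraMap ℂ C^∞⟮IM, M; 𝓘(ℝ, ℂ), ℂ⟯)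

instance ContMDiffSection.instIsScalarTowerComplex :
    IsScalarTower ℂ C^∞⟮IM, M; 𝓘(ℝ, ℂ), ℂ⟯ Cₛ^∞⟮IM; F, V⟯ :=
  ⟨fun c f s => by
    show (c • f) • s = algebraMap ℂ C^∞⟮IM, M; 𝓘(ℝ, ℂ), ℂ⟯ c • f • s
    rw [Algebra.smul_def, mul_smul]⟩

/-- The module of smooth sections of a smooth complex vector bundle of finite rank over a compact
manifold is of finite type: it embeds into a finite free module over the smooth functions. -/
theorem sections_finite_type :
    ∃ (n : ℕ) (φ : Cₛ^∞⟮IM; F, V⟯ →ₗ[C^∞⟮IM, M; 𝓘(ℝ, ℂ), ℂ⟯]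
        (Fin n → C^∞⟮IM, M; 𝓘(ℝ, ℂ), ℂ⟯)), Function.Injective φ := by
  classical
  -- a smooth partition of unity subordinate to the base sets of the trivializations
  obtain ⟨f, hf⟩ := SmoothPartitionOfUnity.exists_isSubordinate (ι := M) IM isClosed_univ
    (fun i => (trivializationAt F V i).baseSet)
    (fun i => (trivializationAt F V i).open_baseSet)
    (fun x _ => Set.mem_iUnion.2 ⟨x, mem_baseSet_trivializationAt F V x⟩)
  set d := Module.finrank ℂ F with hd
  let b : Module.Basis (Fin d) ℂ F := Module.finBasis ℂ F
  let ℓ : Fin d → (F →L[ℂ] ℂ) := fun j => LinearMap.toContinuousLinearMap (b.coord j)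
  -- the component functions
  let g : M → Fin d → Cₛ^∞⟮IM; F, V⟯ → M → ℂ := fun i j s x =>
    f i x • ℓ j ((trivializationAt F V i ⟨x, s x⟩).2)
  have hg : ∀ i j s, ContMDiff IM 𝓘(ℝ, ℂ) ∞ (g i j s) := by
    intro i j s x₀
    by_cases h : x₀ ∈ tsupport (f i)
    · have hx₀ : x₀ ∈ (trivializationAt F V i).baseSet := hf i h
      have hs : ContMDiffAt IM 𝓘(ℝ, F) ∞
          (fun x => (trivializationAt F V x₀ ⟨x, s x⟩).2) x₀ :=
        (Bundle.contMDiffAt_section (s := fun x => s x) x₀).1 (s.contMDiff x₀)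
      have hcc : ContMDiffAt IM 𝓘(ℝ, F →L[ℝ] F) ∞ (fun x =>
          ((trivializationAt F V x₀).coordChangeL ℝ (trivializationAt F V i)
            x : F →L[ℝ] F)) x₀ :=
        contMDiffAt_coordChangeL (mem_baseSet_trivializationAt F V x₀) hx₀
      have key : ContMDiffAt IM 𝓘(ℝ, F) ∞
          (fun x => (trivializationAt F V i ⟨x, s x⟩).2) x₀ := by
        refine (hcc.clm_apply hs).congr_of_eventuallyEq ?_
        refine Filter.eventually_of_mem
          (((trivializationAt F V x₀).open_baseSet.inter
            (trivializationAt F V i).open_baseSet).mem_nhds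
            ⟨mem_baseSet_trivializationAt F V x₀, hx₀⟩) ?_
        intro x hx
        show (trivializationAt F V i ⟨x, s x⟩).2 =
          (trivializationAt F V x₀).coordChangeL ℝ (trivializationAt F V i) x
            ((trivializationAt F V x₀ ⟨x, s x⟩).2)
        rw [Trivialization.coordChangeL_apply _ _ hx,
          Trivialization.symm_apply_apply_mk _ hx.1]
      have hℓ : ContMDiffAt IM 𝓘(ℝ, ℂ) ∞
          (fun x => ℓ j ((trivializationAt F V i ⟨x, s x⟩).2)) x₀ :=
        (((ℓ j).restrictScalars ℝ).contDiff).comp_contMDiffAt key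
      exact ((f i).contMDiff x₀).smul hℓ
    · refine (contMDiffAt_const (c := (0 : ℂ))).congr_of_eventuallyEq ?_
      have : ∀ᶠ x in nhds x₀, f i x = 0 :=
        Filter.eventually_of_mem ((isClosed_tsupport (f i)).isOpen_compl.mem_nhds h)
          fun x hx => image_eq_zero_of_notMem_tsupport hx
      filter_upwards [this] with x hx
      simp [g, hx]
  -- the finitely many indices with nonzero bump function
  have hT : {i : M | (Function.support (f i)).Nonempty}.Finite :=
    f.locallyFinite.finite_nonempty_of_compact
  haveI := hT.fintype
  set T : Set M := {i : M | (Function.support (f i)).Nonempty}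
  -- the linear map into the indexed product
  let ψ : Cₛ^∞⟮IM; F, V⟯ →ₗ[C^∞⟮IM, M; 𝓘(ℝ, ℂ), ℂ⟯]
      ((T × Fin d) → C^∞⟮IM, M; 𝓘(ℝ, ℂ), ℂ⟯) :=
    { toFun := fun s p => ⟨g p.1.1 p.2 s, hg p.1.1 p.2 s⟩
      map_add' := by
        intro s t
        funext p
        ext x
        show g p.1.1 p.2 (s + t) x = g p.1.1 p.2 s x + g p.1.1 p.2 t x
        by_cases hx : x ∈ (trivializationAt F V p.1.1).baseSet
        · simp only [g, ContMDiffSection.coe_add, Pi.add_apply]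
          rw [((trivializationAt F V p.1.1).linear ℂ hx).1, map_add, smul_add]
        · have h0 : f p.1.1 x = 0 := image_eq_zero_of_notMem_tsupport
            fun hmem => hx (hf p.1.1 hmem)
          simp [g, h0]
      map_smul' := by
        intro c s
        funext p
        ext x
        show g p.1.1 p.2 (c • s) x = c x * g p.1.1 p.2 s x
        by_cases hx : x ∈ (trivializationAt F V p.1.1).baseSet
        · simp only [g, ContMDiffSection.coe_smul_smoothMap]
          rw [((trivializationAt F V p.1.1).linear ℂ hx).2, map_smul, smul_eq_mul,
            mul_smul_comm]
        · have h0 : f p.1.1 x = 0 := image_eq_zero_of_notMem_tsupport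
            fun hmem => hx (hf p.1.1 hmem)
          simp [g, h0] }
  have hψ : Function.Injective ψ := by
    intro s t hst
    rw [← sub_eq_zero]
    set u := s - t with hu
    have hst : ψ u = 0 := by rw [hu, map_sub, hst, sub_self]
    apply ContMDiffSection.ext
    intro x
    -- find an index whose bump function is nonzero at `x`
    have h1 : ∑ᶠ i, f i x = 1 := f.sum_eq_one (Set.mem_univ x)
    have hex : ∃ i, f i x ≠ 0 := by
      by_contra hno
      push_neg at hno
      simp only [hno, finsum_zero] at h1
      exact one_ne_zero h1.symm
    obtain ⟨i, hi⟩ := hex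
    have hiT : i ∈ T := ⟨x, hi⟩
    have hx : x ∈ (trivializationAt F V i).baseSet :=
      hf i (subset_closure (Function.mem_support.2 hi))
    have hcoord : ∀ j : Fin d,
        b.coord j ((trivializationAt F V i ⟨x, u x⟩).2) = 0 := by
      intro j
      have := congrFun hst (⟨i, hiT⟩, j)
      have h2 : g i j u x = 0 := by
        have := congrArg (fun (h : C^∞⟮IM, M; 𝓘(ℝ, ℂ), ℂ⟯) => h x) this
        exact this
      rcases smul_eq_zero.1 h2 with h | h
      · exact absurd h hi
      · exact h
    have hF0 : (trivializationAt F V i ⟨x, u x⟩).2 = 0 :=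
      b.forall_coord_eq_zero_iff.1 hcoord
    have := (trivializationAt F V i).symm_apply_apply_mk hx (u x)
    rw [hF0] at this
    rw [← this]
    show (trivializationAt F V i).symm x 0 = 0
    rw [← (trivializationAt F V i).symmₗ_apply (R := ℂ) hx]
    exact ((trivializationAt F V i).symmₗ ℂ x).map_zero
  -- reindex by `Fin n`
  let eqv := LinearEquiv.funCongrLeft C^∞⟮IM, M; 𝓘(ℝ, ℂ), ℂ⟯ C^∞⟮IM, M; 𝓘(ℝ, ℂ), ℂ⟯
    (Fintype.equivFin (T × Fin d)).symm
  exact ⟨Fintype.card (T × Fin d), eqv.toLinearMap.comp ψ,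
    fun a b hab => hψ (eqv.injective hab)⟩


end
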